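/- Let d ≥ 2 be an integer and let u, v be real numbers with v ≥ u > 0. Then lim_{n→∞} dim V(u·n, v·n) / n^d = −((d−1)/d!)·u^d + (1/(d−1)!)·v·u^{d−1}, where dim V(u·n, v·n) equals the number of lattice points α ∈ ℤ_{≥0}^d with α_1+⋯+α_{d−1} < u·n and |α| < v·n. -/

import Mathlib

open Finset
open Filter

/-- lattice points in `ℕ^k` with sum `< b`. -/
def dimVTset (k b : ℕ) : Finset (Fin k → ℕ) :=
  (Fintype.piFinset fun _ => Finset.range b).filter fun β => ∑ i, β i < b

lemma dimV_mem_Tset {k b : ℕ} {β : Fin k → ℕ} : β ∈ dimVTset k b ↔ ∑ i, β i < b := by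
  simp only [dimVTset, Finset.mem_filter, Fintype.mem_piFinset, Finset.mem_range]
  refine ⟨fun h => h.2, fun h => ⟨fun i => lt_of_le_of_lt ?_ h, h⟩⟩
  exact Finset.single_le_sum (f := β) (fun j _ => Nat.zero_le _) (Finset.mem_univ i)

/-- lattice points in `ℕ^(k+1)` with partial sum `< a` and total sum `< b`. -/
def dimVNset (k a b : ℕ) : Finset (Fin (k + 1) → ℕ) :=
  (dimVTset (k + 1) b).filter fun α => ∑ i : Fin k, α i.castSucc < a

lemma dimV_mem_Nset {k a b : ℕ} {α : Fin (k + 1) → ℕ} :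
    α ∈ dimVNset k a b ↔ (∑ i : Fin k, α i.castSucc < a ∧ ∑ i, α i < b) := by
  simp only [dimVNset, Finset.mem_filter, dimV_mem_Tset]
  tauto

lemma dimV_sum_snoc {k : ℕ} (β : Fin k → ℕ) (t : ℕ) :
    ∑ i, Fin.snoc β t i = (∑ i, β i) + t := by
  rw [Fin.sum_univ_castSucc]
  simp [Fin.snoc_castSucc, Fin.snoc_last]

lemma dimV_card_Nset (k a b : ℕ) (hab : a ≤ b) :
    (dimVNset k a b).card = ∑ β ∈ dimVTset k a, (b - ∑ i, β i) := by
  have : ∑ β ∈ dimVTset k a, (b - ∑ i, β i)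
      = ((dimVTset k a).sigma fun β => Finset.range (b - ∑ i, β i)).card := by
    rw [Finset.card_sigma]; simp
  rw [this]
  clear this
  refine (Finset.card_bij' (fun p _ => Fin.snoc p.1 p.2)
    (fun α _ => ⟨Fin.init α, α (Fin.last k)⟩) ?_ ?_ ?_ ?_).symm
  · rintro ⟨β, t⟩ hp
    simp only [Finset.mem_sigma, dimV_mem_Tset, Finset.mem_range] at hp
    rw [dimV_mem_Nset]
    constructor
    · simpa [Fin.snoc_castSucc] using hp.1
    · have h := dimV_sum_snoc β t
      change ∑ i : Fin (k + 1), Fin.snoc β t i < b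
      exact lt_of_eq_of_lt h (by omega)
  · intro α hα
    rw [dimV_mem_Nset] at hα
    simp only [Finset.mem_sigma, dimV_mem_Tset, Finset.mem_range]
    have h1 : ∑ i : Fin k, Fin.init α i = ∑ i : Fin k, α i.castSucc := rfl
    have h2 : ∑ i, α i = (∑ i : Fin k, α i.castSucc) + α (Fin.last k) :=
      Fin.sum_univ_castSucc α
    refine ⟨lt_of_le_of_lt (le_of_eq h1) hα.1, Nat.lt_sub_of_add_lt ?_⟩
    rw [h1]
    omega
  · rintro ⟨β, t⟩ _
    simp [Fin.init_snoc, Fin.snoc_last]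
  · intro α _
    exact Fin.snoc_init_self α

def dimVP (k a : ℕ) : ℕ := (dimVTset k a).card

lemma dimV_Tset_succ (k a : ℕ) : dimVTset (k + 1) a = dimVNset k a a := by
  ext α
  rw [dimV_mem_Tset, dimV_mem_Nset]
  have h2 : ∑ i, α i = (∑ i : Fin k, α i.castSucc) + α (Fin.last k) :=
    Fin.sum_univ_castSucc α
  omega

lemma dimVP_succ (k a : ℕ) :
    dimVP (k + 1) a = ∑ β ∈ dimVTset k a, (a - ∑ i, β i) := by
  rw [dimVP, dimV_Tset_succ, dimV_card_Nset k a a le_rfl]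

lemma dimV_card_Nset' (k a b : ℕ) (hab : a ≤ b) :
    (dimVNset k a b).card = (b - a) * dimVP k a + dimVP (k + 1) a := by
  rw [dimV_card_Nset k a b hab, dimVP_succ]
  have : ∀ β ∈ dimVTset k a, (b - ∑ i, β i) = (b - a) + (a - ∑ i, β i) := by
    intro β hβ
    rw [dimV_mem_Tset] at hβ
    omega
  rw [Finset.sum_congr rfl this, Finset.sum_add_distrib, Finset.sum_const, smul_eq_mul,
    dimVP, mul_comm]

lemma dimVP_eq (k : ℕ) : ∀ a : ℕ, 1 ≤ a → dimVP k a = (a - 1 + k).choose k := by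
  induction k with
  | zero =>
    intro a ha
    have : dimVTset 0 a = {fun i => i.elim0} := by
      ext β
      simp only [dimV_mem_Tset, Finset.mem_singleton]
      constructor
      · intro _; funext i; exact i.elim0
      · intro _; simpa using Nat.lt_of_lt_of_le Nat.zero_lt_one ha
    rw [dimVP, this]; simp
  | succ k ih =>
    intro a ha
    rw [dimVP_succ]
    have step1 : ∀ β ∈ dimVTset k a,
        (a - ∑ i, β i) = ∑ j ∈ Finset.range a, if (∑ i, β i) + j < a then 1 else 0 := by
      intro β hβ
      rw [dimV_mem_Tset] at hβ
      rw [Finset.sum_boole]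
      have : (Finset.range a).filter (fun j => (∑ i, β i) + j < a)
          = Finset.range (a - ∑ i, β i) := by
        ext j
        simp only [Finset.mem_filter, Finset.mem_range]
        omega
      rw [this, Finset.card_range]
      simp
    rw [Finset.sum_congr rfl step1, Finset.sum_comm]
    have step2 : ∀ j ∈ Finset.range a,
        (∑ β ∈ dimVTset k a, if (∑ i, β i) + j < a then 1 else 0)
          = (a - 1 - j + k).choose k := by
      intro j hj
      rw [Finset.mem_range] at hj
      rw [Finset.sum_boole]
      have : (dimVTset k a).filter (fun β => (∑ i, β i) + j < a)
          = dimVTset k (a - j) := by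
        ext β
        simp only [Finset.mem_filter, dimV_mem_Tset]
        omega
      rw [this, Nat.cast_id]
      have := ih (a - j) (by omega)
      rw [dimVP] at this
      rw [this]
      congr 2
      omega
    rw [Finset.sum_congr rfl step2,
      Finset.sum_range_reflect (fun i => (i + k).choose k) a]
    have hr : Finset.range a = Finset.range (a - 1 + 1) := by congr 1; omega
    rw [hr, Nat.sum_range_add_choose (a - 1) k]
    rfl

lemma dimV_filter_eq (k : ℕ) :
    (Finset.univ.filter fun i : Fin (k + 1) => (i : ℕ) < (k + 1) - 1)
      = Finset.univ.map Fin.castSuccEmb := by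
  ext i
  simp only [Finset.mem_filter, Finset.mem_univ, true_and, Finset.mem_map]
  constructor
  · intro hi
    exact ⟨⟨i, by omega⟩, Fin.ext rfl⟩
  · rintro ⟨j, rfl⟩
    exact j.isLt

lemma dimV_ncard (k : ℕ) (u v : ℝ) (n : ℕ) :
    {α : Fin (k + 1) →₀ ℕ |
        ((∑ i ∈ Finset.univ.filter fun i : Fin (k + 1) => (i : ℕ) < (k + 1) - 1, α i : ℕ) : ℝ) <
          u * (n : ℝ) ∧
        ((∑ i, α i : ℕ) : ℝ) < v * (n : ℝ)}.ncard
      = (dimVNset k ⌈u * (n : ℝ)⌉₊ ⌈v * (n : ℝ)⌉₊).card := by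
  set e := Finsupp.equivFunOnFinite (α := Fin (k + 1)) (M := ℕ) with he
  set S : Set (Fin (k + 1) →₀ ℕ) := {α |
        ((∑ i ∈ Finset.univ.filter fun i : Fin (k + 1) => (i : ℕ) < (k + 1) - 1, α i : ℕ) : ℝ) <
          u * (n : ℝ) ∧
        ((∑ i, α i : ℕ) : ℝ) < v * (n : ℝ)} with hS
  have himg : e '' S = ↑(dimVNset k ⌈u * (n : ℝ)⌉₊ ⌈v * (n : ℝ)⌉₊) := by
    rw [Equiv.image_eq_preimage_symm]
    ext x
    simp only [Set.mem_preimage, hS, Set.mem_setOf_eq, Finset.mem_coe, dimV_mem_Nset]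
    have hx : ∀ i, (e.symm x) i = x i := fun i => rfl
    simp only [hx]
    rw [dimV_filter_eq, Finset.sum_map]
    have hcast : ∀ j : Fin k, Fin.castSuccEmb j = j.castSucc := fun j => rfl
    simp only [hcast]
    rw [← Nat.lt_ceil, ← Nat.lt_ceil]
  calc S.ncard = (e '' S).ncard := (Set.ncard_image_of_injective S e.injective).symm
    _ = _ := by rw [himg, Set.ncard_coe_finset]


lemma dimV_tendsto_ceil_div (u : ℝ) (hu : 0 < u) :
    Tendsto (fun n : ℕ => (⌈u * (n : ℝ)⌉₊ : ℝ) / n) atTop (nhds u) := by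
  have h0 : Tendsto (fun n : ℕ => u + 1 / (n : ℝ)) atTop (nhds u) := by
    simpa using tendsto_const_nhds.add (tendsto_one_div_atTop_nhds_zero_nat (𝕜 := ℝ))
  refine tendsto_of_tendsto_of_tendsto_of_le_of_le' (tendsto_const_nhds) h0 ?_ ?_
  · filter_upwards [eventually_ge_atTop 1] with n hn
    have hn' : (0 : ℝ) < n := by exact_mod_cast hn
    rw [le_div_iff₀ hn']
    exact Nat.le_ceil _
  · filter_upwards [eventually_ge_atTop 1] with n hn
    have hn' : (0 : ℝ) < n := by exact_mod_cast hn
    rw [div_le_iff₀ hn']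
    have h1 : (⌈u * (n : ℝ)⌉₊ : ℝ) < u * n + 1 :=
      Nat.ceil_lt_add_one (by positivity)
    have h2 : (u + 1 / n) * n = u * n + 1 := by field_simp
    rw [h2]
    exact h1.le

lemma dimV_tendsto_P_div (k : ℕ) (u : ℝ) (hu : 0 < u) :
    Tendsto (fun n : ℕ => (dimVP k ⌈u * (n : ℝ)⌉₊ : ℝ) / (n : ℝ) ^ k) atTop
      (nhds (u ^ k / (Nat.factorial k : ℝ))) := by
  have hA := dimV_tendsto_ceil_div u hu
  have hprod : Tendsto
      (fun n : ℕ => (∏ i ∈ Finset.range k, ((⌈u * (n : ℝ)⌉₊ : ℝ) + (k - 1 - i : ℕ)) / n)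
        / (Nat.factorial k : ℝ)) atTop (nhds (u ^ k / (Nat.factorial k : ℝ))) := by
    have : Tendsto
        (fun n : ℕ => ∏ i ∈ Finset.range k, ((⌈u * (n : ℝ)⌉₊ : ℝ) + (k - 1 - i : ℕ)) / n)
        atTop (nhds (∏ _i ∈ Finset.range k, u)) := by
      refine tendsto_finset_prod _ fun i _ => ?_
      have h2 : Tendsto (fun n : ℕ => ((k - 1 - i : ℕ) : ℝ) / n) atTop (nhds 0) := by
        simpa [div_eq_mul_inv] using tendsto_const_nhds.mul tendsto_one_div_atTop_nhds_zero_nat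
          (f := fun _ : ℕ => ((k - 1 - i : ℕ) : ℝ))
      have := hA.add h2
      simp only [add_zero] at this
      refine this.congr fun n => ?_
      rw [← add_div]
    rw [Finset.prod_const, Finset.card_range] at this
    exact this.div_const _
  refine hprod.congr' ?_
  filter_upwards [eventually_ge_atTop 1] with n hn
  have ha1 : 1 ≤ ⌈u * (n : ℝ)⌉₊ := by
    refine Nat.one_le_ceil_iff.mpr ?_
    have : (0:ℝ) < n := by exact_mod_cast hn
    positivity
  set a := ⌈u * (n : ℝ)⌉₊ with ha
  rw [dimVP_eq k a ha1]
  have hdesc : (a - 1 + k).choose k = (a - 1 + k).descFactorial k / Nat.factorial k :=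
    Nat.choose_eq_descFactorial_div_factorial _ _
  have hfac : Nat.factorial k * (a - 1 + k).choose k = (a - 1 + k).descFactorial k :=
    (Nat.descFactorial_eq_factorial_mul_choose _ _).symm
  have hcast : ((a - 1 + k).choose k : ℝ) = ((a - 1 + k).descFactorial k : ℝ)
      / (Nat.factorial k : ℝ) := by
    rw [eq_div_iff (by exact_mod_cast (Nat.factorial_pos k).ne')]
    exact_mod_cast (mul_comm (Nat.factorial k) _ ▸ hfac)
  rw [hcast]
  rw [Nat.descFactorial_eq_prod_range]
  have hterm : ∀ i ∈ Finset.range k, ((a - 1 + k - i : ℕ) : ℝ) = (a : ℝ) + ((k - 1 - i : ℕ) : ℝ) := by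
    intro i hi
    rw [Finset.mem_range] at hi
    have : a - 1 + k - i = a + (k - 1 - i) := by omega
    rw [this]
    push_cast
    ring
  rw [Nat.cast_prod, Finset.prod_congr rfl hterm]
  rw [Finset.prod_div_distrib, Finset.prod_const, Finset.card_range]
  rw [div_div, div_div, mul_comm]

/-- Let `d ≥ 2` and `v ≥ u > 0` be reals. Then
`dim V(un, vn) / n^d → -((d-1)/d!) u^d + (1/(d-1)!) v u^{d-1}` as `n → ∞`, where
`dim V(un, vn)` is the number of lattice points `α ∈ ℤ_{≥0}^d` with
`α_1 + ⋯ + α_{d-1} < u n` and `|α| < v n`. -/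
theorem dimV_asymptotics (d : ℕ) (hd : 2 ≤ d) (u v : ℝ) (hu : 0 < u) (huv : u ≤ v) :
    Filter.Tendsto
      (fun n : ℕ =>
        (Set.ncard {α : Fin d →₀ ℕ |
            ((∑ i ∈ Finset.univ.filter fun i : Fin d => (i : ℕ) < d - 1, α i : ℕ) : ℝ) <
              u * (n : ℝ) ∧
            ((∑ i, α i : ℕ) : ℝ) < v * (n : ℝ)} : ℝ) / (n : ℝ) ^ d)
      Filter.atTop
      (nhds (-(((d : ℝ) - 1) / (Nat.factorial d : ℝ)) * u ^ d +
        (1 / (Nat.factorial (d - 1) : ℝ)) * v * u ^ (d - 1))) := by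
  have hv : 0 < v := lt_of_lt_of_le hu huv
  obtain ⟨k, rfl⟩ : ∃ k, d = k + 1 := ⟨d - 1, by omega⟩
  have hab : ∀ n : ℕ, ⌈u * (n : ℝ)⌉₊ ≤ ⌈v * (n : ℝ)⌉₊ := fun n =>
    Nat.ceil_le_ceil (mul_le_mul_of_nonneg_right huv (Nat.cast_nonneg n))
  -- the limit components
  have hA := dimV_tendsto_ceil_div u hu
  have hB := dimV_tendsto_ceil_div v hv
  have hBA : Tendsto (fun n : ℕ =>
      ((⌈v * (n : ℝ)⌉₊ - ⌈u * (n : ℝ)⌉₊ : ℕ) : ℝ) / n) atTop (nhds (v - u)) := by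
    refine (hB.sub hA).congr fun n => ?_
    rw [Nat.cast_sub (hab n), sub_div]
  have hP1 := dimV_tendsto_P_div k u hu
  have hP2 := dimV_tendsto_P_div (k + 1) u hu
  have hF : Tendsto (fun n : ℕ =>
      (((⌈v * (n : ℝ)⌉₊ - ⌈u * (n : ℝ)⌉₊ : ℕ) : ℝ) / n) *
        ((dimVP k ⌈u * (n : ℝ)⌉₊ : ℝ) / (n : ℝ) ^ k) +
        (dimVP (k + 1) ⌈u * (n : ℝ)⌉₊ : ℝ) / (n : ℝ) ^ (k + 1)) atTop
      (nhds ((v - u) * (u ^ k / (Nat.factorial k : ℝ)) +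
        u ^ (k + 1) / (Nat.factorial (k + 1) : ℝ))) :=
    (hBA.mul hP1).add hP2
  -- identify the limit value
  have hval : ((v - u) * (u ^ k / (Nat.factorial k : ℝ)) +
        u ^ (k + 1) / (Nat.factorial (k + 1) : ℝ))
      = -((((k : ℝ) + 1) - 1) / (Nat.factorial (k + 1) : ℝ)) * u ^ (k + 1) +
        (1 / (Nat.factorial ((k + 1) - 1) : ℝ)) * v * u ^ ((k + 1) - 1) := by
    have h1 : (k + 1) - 1 = k := rfl
    rw [h1, Nat.factorial_succ]
    have hk0 : (Nat.factorial k : ℝ) ≠ 0 := by exact_mod_cast (Nat.factorial_pos k).ne'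
    have hk1 : ((k : ℝ) + 1) ≠ 0 := by positivity
    push_cast
    field_simp
    ring
  rw [show (((k + 1 : ℕ) : ℝ) - 1) = (((k : ℝ) + 1) - 1) by push_cast; ring] at *
  refine Tendsto.congr' ?_ (hval ▸ hF)
  -- eventual equality
  filter_upwards [eventually_ge_atTop 1] with n hn
  have hn0 : (0 : ℝ) < n := by exact_mod_cast hn
  rw [dimV_ncard k u v n, dimV_card_Nset' k _ _ (hab n)]
  push_cast
  rw [Nat.cast_sub (hab n)]
  field_simp
  ring
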